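/- Define c̃(ρ) = (erf⁻¹(ρ))² on (0,1). Then for all ρ ∈ (0,1), ρ·c̃'(ρ) - c̃(ρ) > 0, and the function ρ ↦ ρ·c̃'(ρ) - c̃(ρ) is strictly increasing on (0,1). -/

import Mathlib

/-- The Gaussian error function `erf z = (2/√π) ∫₀^z e^{-t²} dt`. -/
noncomputable def erf (z : ℝ) : ℝ :=
  (2 / Real.sqrt Real.pi) * ∫ t in (0:ℝ)..z, Real.exp (-t ^ 2)

/-- The inverse of the Gaussian error function. -/
noncomputable def erfInv : ℝ → ℝ := Function.invFun erf

/-- The cost function . -/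
noncomputable def ctilde (ρ : ℝ) : ℝ := erfInv ρ ^ 2

lemma hasStrictDerivAt_erf (x : ℝ) :
    HasStrictDerivAt erf (2 / Real.sqrt Real.pi * Real.exp (-x ^ 2)) x := by
  have hc : Continuous fun t : ℝ => Real.exp (-t ^ 2) := by continuity
  exact (hc.integral_hasStrictDerivAt 0 x).const_mul _

lemma erf_strictMono : StrictMono erf :=
  strictMono_of_deriv_pos fun x => by
    rw [(hasStrictDerivAt_erf x).hasDerivAt.deriv]; positivity

lemma erf_zero : erf 0 = 0 := by simp [erf]

open MeasureTheory in
lemma erf_tendsto : Filter.Tendsto erf Filter.atTop (nhds 1) := by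
  have hint : IntegrableOn (fun t : ℝ => Real.exp (-t ^ 2)) (Set.Ioi 0) := by
    have := integrable_exp_neg_mul_sq (b := 1) one_pos
    simpa using this.integrableOn
  have h1 : Filter.Tendsto (fun z : ℝ => ∫ t in (0:ℝ)..z, Real.exp (-t ^ 2))
      Filter.atTop (nhds (∫ t in Set.Ioi (0:ℝ), Real.exp (-t ^ 2))) :=
    intervalIntegral_tendsto_integral_Ioi 0 hint Filter.tendsto_id
  have h2 : (∫ t in Set.Ioi (0:ℝ), Real.exp (-t ^ 2)) = Real.sqrt Real.pi / 2 := by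
    have := integral_gaussian_Ioi 1
    simpa using this
  rw [h2] at h1
  have := h1.const_mul (2 / Real.sqrt Real.pi)
  have heq : (2 / Real.sqrt Real.pi) * (Real.sqrt Real.pi / 2) = 1 := by
    field_simp
  rw [heq] at this
  exact this

lemma erf_surjOn {ρ : ℝ} (hρ : ρ ∈ Set.Ioo (0:ℝ) 1) : ∃ x > 0, erf x = ρ := by
  obtain ⟨z, hz⟩ := (erf_tendsto.eventually_const_lt hρ.2).exists
  have hcont : ContinuousOn erf (Set.Icc 0 z) := fun y _ =>
    (hasStrictDerivAt_erf y).hasDerivAt.continuousAt.continuousWithinAt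
  have h0z : (0:ℝ) ≤ z := by
    by_contra h
    exact absurd (hz.trans (erf_strictMono (by linarith : z < 0)))
      (by rw [erf_zero]; linarith [hρ.1, hρ.2])
  have : ρ ∈ Set.Icc (erf 0) (erf z) := ⟨by rw [erf_zero]; exact hρ.1.le, hz.le⟩
  obtain ⟨x, hx, hxe⟩ := intermediate_value_Icc h0z hcont this
  refine ⟨x, ?_, hxe⟩
  rcases hx.1.lt_or_eq with h | h
  · exact h
  · exfalso; rw [← h, erf_zero] at hxe; exact hρ.1.ne' hxe.symm

lemma erf_erfInv {ρ : ℝ} (hρ : ρ ∈ Set.Ioo (0:ℝ) 1) : erf (erfInv ρ) = ρ := by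
  obtain ⟨x, _, hx⟩ := erf_surjOn hρ
  exact Function.invFun_eq ⟨x, hx⟩

lemma erfInv_pos {ρ : ℝ} (hρ : ρ ∈ Set.Ioo (0:ℝ) 1) : 0 < erfInv ρ := by
  by_contra h
  push_neg at h
  have h2 : erf (erfInv ρ) ≤ erf 0 := erf_strictMono.le_iff_le.2 h
  rw [erf_erfInv hρ, erf_zero] at h2
  exact absurd h2 (not_le.2 hρ.1)

lemma hasStrictDerivAt_erfInv {ρ : ℝ} (hρ : ρ ∈ Set.Ioo (0:ℝ) 1) :
    HasStrictDerivAt erfInv (2 / Real.sqrt Real.pi * Real.exp (-(erfInv ρ) ^ 2))⁻¹ ρ := by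
  have hd : (2 / Real.sqrt Real.pi * Real.exp (-(erfInv ρ) ^ 2)) ≠ 0 := by positivity
  have := (hasStrictDerivAt_erf (erfInv ρ)).to_local_left_inverse (g := erfInv) (hf' := hd)
    (Filter.Eventually.of_forall (Function.leftInverse_invFun erf_strictMono.injective))
  rwa [erf_erfInv hρ] at this

/-- The key auxiliary function: `G x = √π x e^{x²} erf x - x²`. -/
noncomputable def Gfun (x : ℝ) : ℝ :=
  Real.sqrt Real.pi * x * Real.exp (x ^ 2) * erf x - x ^ 2

lemma hasDerivAt_Gfun (x : ℝ) :
    HasDerivAt Gfun (Real.sqrt Real.pi * Real.exp (x ^ 2) * (1 + 2 * x ^ 2) * erf x) x := by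
  have h1 : HasDerivAt (fun y : ℝ => Real.sqrt Real.pi * y * Real.exp (y ^ 2))
      (Real.sqrt Real.pi * Real.exp (x ^ 2) * (1 + 2 * x ^ 2)) x := by
    have ha : HasDerivAt (fun y : ℝ => Real.sqrt Real.pi * y) (Real.sqrt Real.pi) x :=
      (hasDerivAt_id x).const_mul _ |>.congr_deriv (by ring)
    have hb : HasDerivAt (fun y : ℝ => Real.exp (y ^ 2)) (Real.exp (x ^ 2) * (2 * x)) x := by
      have := ((hasDerivAt_pow 2 x).exp)
      simpa [mul_comm] using this
    have := ha.fun_mul hb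
    exact this.congr_deriv (by ring)
  have h2 := (hasStrictDerivAt_erf x).hasDerivAt
  have h3 := (h1.fun_mul h2).fun_sub (hasDerivAt_pow 2 x)
  refine h3.congr_deriv ?_
  symm
  have hπ : Real.sqrt Real.pi ≠ 0 := by positivity
  have hx : Real.exp (x ^ 2) * Real.exp (-x ^ 2) = 1 := by
    rw [← Real.exp_add]; simp
  field_simp
  linear_combination (-(x * 2)) * hx

lemma Gfun_strictMonoOn : StrictMonoOn Gfun (Set.Ici 0) := by
  apply strictMonoOn_of_deriv_pos (convex_Ici 0)
    (fun y _ => (hasDerivAt_Gfun y).continuousAt.continuousWithinAt)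
  intro x hx
  rw [interior_Ici] at hx
  rw [(hasDerivAt_Gfun x).deriv]
  have herf : 0 < erf x := by
    have := erf_strictMono hx
    rwa [erf_zero] at this
  positivity

lemma Gfun_zero : Gfun 0 = 0 := by simp [Gfun]

lemma deriv_ctilde {ρ : ℝ} (hρ : ρ ∈ Set.Ioo (0:ℝ) 1) :
    deriv ctilde ρ = Real.sqrt Real.pi * erfInv ρ * Real.exp (erfInv ρ ^ 2) := by
  have h := (hasStrictDerivAt_erfInv hρ).hasDerivAt.fun_pow 2
  have hd : deriv ctilde ρ =
      2 * erfInv ρ ^ 1 * (2 / Real.sqrt Real.pi * Real.exp (-(erfInv ρ) ^ 2))⁻¹ := by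
    have : ctilde = fun ρ => erfInv ρ ^ 2 := rfl
    rw [this]
    simpa using h.deriv
  rw [hd]
  have hπ : Real.sqrt Real.pi ≠ 0 := by positivity
  have hexp : Real.exp (-(erfInv ρ) ^ 2) ≠ 0 := Real.exp_ne_zero _
  rw [mul_inv, ← Real.exp_neg, neg_neg, inv_div]
  field_simp

lemma gap_eq {ρ : ℝ} (hρ : ρ ∈ Set.Ioo (0:ℝ) 1) :
    ρ * deriv ctilde ρ - ctilde ρ = Gfun (erfInv ρ) := by
  rw [deriv_ctilde hρ]
  unfold Gfun ctilde
  rw [erf_erfInv hρ]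
  ring

/--  on , and  is strictly increasing. -/
theorem ctilde_marginal_gap :
    (∀ ρ ∈ Set.Ioo (0:ℝ) 1, 0 < ρ * deriv ctilde ρ - ctilde ρ) ∧
    StrictMonoOn (fun ρ => ρ * deriv ctilde ρ - ctilde ρ) (Set.Ioo (0:ℝ) 1) := by
  constructor
  · intro ρ hρ
    rw [gap_eq hρ, ← Gfun_zero]
    exact Gfun_strictMonoOn (Set.mem_Ici.2 le_rfl) (erfInv_pos hρ).le (erfInv_pos hρ)
  · intro ρ₁ h₁ ρ₂ h₂ hlt
    simp only
    rw [gap_eq h₁, gap_eq h₂]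
    apply Gfun_strictMonoOn (erfInv_pos h₁).le (erfInv_pos h₂).le
    have : erf (erfInv ρ₁) < erf (erfInv ρ₂) := by
      rw [erf_erfInv h₁, erf_erfInv h₂]; exact hlt
    exact erf_strictMono.lt_iff_lt.mp this
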